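/- arXiv:2210.06149 — 2 statements merged into one kernel-verified Lean document; each statement's English description precedes it below -/
import Mathlib

section
/- Let A ∈ ℂ^{n×n}, B ∈ ℂ^{n×m}, λ ∈ ℂ an eigenvalue of A, and v ∈ ℂ^m a nonzero vector. If v ∈ Bᵀ · ker((λI − A)ᵀ) (i.e. v = Bᵀη for some left eigenvector η of A at λ) and the pair obtained by restricting to the uncontrollable subspace satisfies B̄_c v = 0 in the Kalman controllability decomposition with λ ∉ spec(A_c), then a contradiction arises: v ∈ im B̄_cᵀ = (ker B̄_c)^⊥ while B̄_c v = 0 and v ≠ 0 is impossible. Hence if v ∈ Bᵀ ker(λI−A)ᵀ is nonzero and (A, Bv) has uncontrollable decomposition with B̄_c v = 0, then λ ∈ spec(A_c). -/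
open Matrix

/-- Kalman decomposition step. Suppose `A = [[A_c, A₁₂],[0, Ā_c]]`,
`B = [B_c; B̄_c]`, `λ ∈ spec(A)`, and `0 ≠ v = Bᴴη` for some `η` with
`(λI − A)ᴴη = 0` (i.e. `v` lies in the input pole direction `Bᵀ ker(λI−A)ᵀ`).
If `B̄_c v = 0`, then `λ ∈ spec(A_c)`. -/
theorem kalman_uncontrollable_contradiction {n1 n2 m : ℕ}
    (Ac : Matrix (Fin n1) (Fin n1) ℂ) (A12 : Matrix (Fin n1) (Fin n2) ℂ)
    (Abar : Matrix (Fin n2) (Fin n2) ℂ)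
    (Bc : Matrix (Fin n1) (Fin m) ℂ) (Bbar : Matrix (Fin n2) (Fin m) ℂ)
    (lam : ℂ) (v : Fin m → ℂ) (hv : v ≠ 0)
    (A : Matrix (Fin n1 ⊕ Fin n2) (Fin n1 ⊕ Fin n2) ℂ)
    (B : Matrix (Fin n1 ⊕ Fin n2) (Fin m) ℂ)
    (hA : A = Matrix.fromBlocks Ac A12 0 Abar)
    (hB : B = Matrix.fromRows Bc Bbar)
    (hlam : lam ∈ spectrum ℂ A)
    (hdir : ∃ η : Fin n1 ⊕ Fin n2 → ℂ,
        Matrix.mulVec (lam • (1 : Matrix (Fin n1 ⊕ Fin n2) (Fin n1 ⊕ Fin n2) ℂ) - A)ᴴ η = 0 ∧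
        v = Matrix.mulVec Bᴴ η)
    (hBbar : Matrix.mulVec Bbar v = 0) :
    lam ∈ spectrum ℂ Ac := by
  obtain ⟨η, hη, hvη⟩ := hdir
  set η₁ : Fin n1 → ℂ := η ∘ Sum.inl with hη₁
  set η₂ : Fin n2 → ℂ := η ∘ Sum.inr with hη₂
  have hηelim : η = Sum.elim η₁ η₂ := by funext i; cases i <;> rfl
  -- rewrite the eigen-equation
  have hM : (lam • (1 : Matrix (Fin n1 ⊕ Fin n2) (Fin n1 ⊕ Fin n2) ℂ) - A)ᴴ
      = fromBlocks ((starRingEnd ℂ) lam • 1 - Acᴴ) 0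
          (-A12ᴴ) ((starRingEnd ℂ) lam • 1 - Abarᴴ) := by
    rw [hA, conjTranspose_sub, conjTranspose_smul, conjTranspose_one,
      fromBlocks_conjTranspose,
      show (1 : Matrix (Fin n1 ⊕ Fin n2) (Fin n1 ⊕ Fin n2) ℂ) = fromBlocks 1 0 0 1
        from (fromBlocks_one).symm,
      fromBlocks_smul, sub_eq_add_neg, fromBlocks_neg, fromBlocks_add]
    simp only [conjTranspose_zero, neg_zero, smul_zero, add_zero, zero_add,
      ← sub_eq_add_neg, starRingEnd_apply, zero_sub]
  have key := hη
  rw [hM, hηelim, fromBlocks_mulVec] at key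
  have h1 : ((starRingEnd ℂ) lam • 1 - Acᴴ) *ᵥ η₁ = 0 := by
    funext i
    have := congrFun key (Sum.inl i)
    simpa using this
  by_cases hη1 : η₁ = 0
  · -- contradiction case
    exfalso
    have hvB : v = Bbarᴴ *ᵥ η₂ := by
      rw [hvη, hB, conjTranspose_fromRows_eq_fromCols_conjTranspose, hηelim,
        fromCols_mulVec_sumElim, hη1]
      simp
    have hzero : star v ⬝ᵥ v = 0 := by
      have hsv : star v = star η₂ ᵥ* Bbar := by
        rw [hvB, star_mulVec, conjTranspose_conjTranspose]
      rw [hsv, ← dotProduct_mulVec, hBbar, dotProduct_zero]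
    have hsum : ∑ i, Complex.normSq (v i) = 0 := by
      have : ((∑ i, Complex.normSq (v i) : ℝ) : ℂ) = 0 := by
        push_cast
        rw [← hzero]
        simp [dotProduct, Complex.normSq_eq_conj_mul_self, Pi.star_apply,
          RCLike.star_def]
      exact_mod_cast this
    have hall := (Finset.sum_eq_zero_iff_of_nonneg
      (fun i _ => Complex.normSq_nonneg (v i))).mp hsum
    exact hv (funext fun i => Complex.normSq_eq_zero.mp (hall i (Finset.mem_univ i)))
  · -- η₁ is a left eigenvector of Ac
    have hdet : ((starRingEnd ℂ) lam • 1 - Acᴴ).det = 0 :=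
      (Matrix.exists_mulVec_eq_zero_iff).mp ⟨η₁, hη1, h1⟩
    have hdet2 : (lam • 1 - Ac).det = 0 := by
      have hCT : ((starRingEnd ℂ) lam • 1 - Acᴴ) = (lam • 1 - Ac)ᴴ := by
        rw [conjTranspose_sub, conjTranspose_smul, conjTranspose_one]
        rfl
      rw [hCT, det_conjTranspose] at hdet
      exact star_eq_zero.mp hdet
    rw [spectrum.mem_iff, Algebra.algebraMap_eq_smul_one]
    intro hU
    rw [Matrix.isUnit_iff_isUnit_det] at hU
    exact hU.ne_zero hdet2
end

section
/- Let G(s) = D + C(sI−A)^{-1}B be a minimal realization and λ an eigenvalue of A. If v is a nonzero vector in Bᵀ ker((λI−A)ᵀ) (the input pole direction of G at λ), then the vector-valued rational function s ↦ G(s)v has a pole at λ (it is unbounded near λ). -/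
open Matrix Topology
open Filter

/-- for a minimal realization `G(s) = D + C(sI−A)⁻¹B` (PBH
controllability and observability) and an eigenvalue `λ` of `A`, any nonzero `v` in
the input pole direction `Bᵀ ker((λI−A)ᵀ)` yields a pole of `s ↦ G(s)v` at `λ`:
this vector-valued function is unbounded near `λ`. -/
theorem input_pole_direction_gives_pole {n m p : ℕ}
    (A : Matrix (Fin n) (Fin n) ℂ) (B : Matrix (Fin n) (Fin m) ℂ)
    (C : Matrix (Fin p) (Fin n) ℂ) (D : Matrix (Fin p) (Fin m) ℂ)
    (hctrb : ∀ (μ' : ℂ) (w : Fin n → ℂ),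
      Matrix.vecMul w A = μ' • w → Matrix.vecMul w B = 0 → w = 0)
    (hobsv : ∀ (μ' : ℂ) (x : Fin n → ℂ),
      Matrix.mulVec A x = μ' • x → Matrix.mulVec C x = 0 → x = 0)
    (lam : ℂ) (hlam : lam ∈ spectrum ℂ A)
    (v : Fin m → ℂ) (hv : v ≠ 0)
    (hdir : ∃ η : Fin n → ℂ,
      Matrix.mulVec (lam • (1 : Matrix (Fin n) (Fin n) ℂ) - A)ᴴ η = 0 ∧
      v = Matrix.mulVec Bᴴ η) :
    ¬ ∃ Cb : ℝ, ∀ᶠ s in 𝓝[≠] lam,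
        ‖Matrix.mulVec (D + C * (s • (1 : Matrix (Fin n) (Fin n) ℂ) - A)⁻¹ * B) v‖ ≤ Cb := by
  rintro ⟨Cb, hCb⟩
  obtain ⟨η, hη, hvB⟩ := hdir
  have hη0 : η ≠ 0 := by
    rintro rfl
    rw [Matrix.mulVec_zero] at hvB
    exact hv hvB
  set w : Fin n → ℂ := star η with hw
  have hAη : Aᴴ *ᵥ η = (starRingEnd ℂ lam) • η := by
    have h := hη
    rw [Matrix.conjTranspose_sub, Matrix.sub_mulVec, sub_eq_zero] at h
    rw [← h, Matrix.conjTranspose_smul, Matrix.conjTranspose_one,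
      Matrix.smul_mulVec, Matrix.one_mulVec]
    rfl
  have hwA : w ᵥ* A = lam • w := by
    have h := congrArg star hAη
    rw [Matrix.star_mulVec, Matrix.conjTranspose_conjTranspose, star_smul] at h
    simpa using h
  have hwB : w ᵥ* B = star v := by
    rw [hvB, Matrix.star_mulVec, Matrix.conjTranspose_conjTranspose]
  set c : ℂ := star v ⬝ᵥ v with hc
  have hc0 : c ≠ 0 := by
    intro h
    apply hv
    have hcsum : c = ((∑ i, Complex.normSq (v i) : ℝ) : ℂ) := by
      rw [hc]
      simp [dotProduct, Complex.normSq_eq_conj_mul_self, Complex.star_def]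
    rw [h] at hcsum
    have hsum : (∑ i, Complex.normSq (v i)) = 0 := by exact_mod_cast hcsum.symm
    have hzero := (Finset.sum_eq_zero_iff_of_nonneg
      (fun i _ => Complex.normSq_nonneg (v i))).mp hsum
    funext i
    exact Complex.normSq_eq_zero.mp (hzero i (Finset.mem_univ i))
  -- eventually invertible in the punctured neighborhood
  have hev_unit : ∀ᶠ s in 𝓝[≠] lam,
      IsUnit (s • (1 : Matrix (Fin n) (Fin n) ℂ) - A).det := by
    have hfin : (spectrum ℂ A \ {lam}).Finite := A.finite_spectrum.subset Set.diff_subset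
    have hcl : IsClosed (spectrum ℂ A \ {lam}) := hfin.isClosed
    have hnot : lam ∈ (spectrum ℂ A \ {lam})ᶜ := by simp
    have h1 : ∀ᶠ s in 𝓝 lam, s ∈ (spectrum ℂ A \ {lam})ᶜ :=
      hcl.isOpen_compl.eventually_mem hnot
    filter_upwards [nhdsWithin_le_nhds h1, eventually_mem_nhdsWithin] with s hs hs'
    have hs2 : s ∉ spectrum ℂ A := fun hmem => hs ⟨hmem, hs'⟩
    rw [spectrum.notMem_iff] at hs2
    rw [Algebra.algebraMap_eq_smul_one] at hs2
    exact (Matrix.isUnit_iff_isUnit_det _).mp hs2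
  -- extract a sequence
  obtain ⟨s0, hs0⟩ := (𝓝[≠] lam).exists_seq_tendsto
  have hall : ∀ᶠ k in atTop,
      (‖Matrix.mulVec (D + C * (s0 k • (1 : Matrix (Fin n) (Fin n) ℂ) - A)⁻¹ * B) v‖ ≤ Cb ∧
        IsUnit (s0 k • (1 : Matrix (Fin n) (Fin n) ℂ) - A).det) ∧ s0 k ≠ lam :=
    hs0.eventually ((hCb.and hev_unit).and eventually_mem_nhdsWithin)
  obtain ⟨N, hN⟩ := eventually_atTop.mp hall
  set t : ℕ → ℂ := fun k => s0 (k + N) with ht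
  have hT : ∀ k, (‖Matrix.mulVec (D + C * (t k • (1 : Matrix (Fin n) (Fin n) ℂ) - A)⁻¹ * B) v‖ ≤ Cb ∧
      IsUnit (t k • (1 : Matrix (Fin n) (Fin n) ℂ) - A).det) ∧ t k ≠ lam :=
    fun k => hN (k + N) (Nat.le_add_left N k)
  have ht_tend : Tendsto t atTop (𝓝 lam) :=
    (hs0.comp (tendsto_add_atTop_nat N)).mono_right nhdsWithin_le_nhds
  set M : ℕ → Matrix (Fin n) (Fin n) ℂ :=
    fun k => t k • (1 : Matrix (Fin n) (Fin n) ℂ) - A with hM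
  set x : ℕ → (Fin n → ℂ) := fun k => (M k)⁻¹ *ᵥ (B *ᵥ v) with hx
  have hMx : ∀ k, M k *ᵥ x k = B *ᵥ v := by
    intro k
    rw [hx, Matrix.mulVec_mulVec, Matrix.mul_nonsing_inv _ (hT k).1.2, Matrix.one_mulVec]
  have hscalar : ∀ k, (t k - lam) * (w ⬝ᵥ x k) = c := by
    intro k
    have h := congrArg (fun y => w ⬝ᵥ y) (hMx k)
    simp only [Matrix.dotProduct_mulVec] at h
    rw [hwB] at h
    have hwM : w ᵥ* M k = (t k - lam) • w := by
      rw [hM, Matrix.vecMul_sub, hwA]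
      have h1 : w ᵥ* (t k • (1 : Matrix (Fin n) (Fin n) ℂ)) = t k • w := by
        ext j
        simp [Matrix.vecMul, dotProduct, Matrix.smul_apply, Matrix.one_apply,
          mul_ite, mul_comm]
      rw [h1, sub_smul]
    rw [hwM, smul_dotProduct, smul_eq_mul] at h
    exact h
  -- norm of x blows up
  obtain ⟨i0, hi0'⟩ : ∃ i, η i ≠ 0 := Function.ne_iff.mp hη0
  have hi0 : w i0 ≠ 0 := by simpa [hw] using star_ne_zero.mpr hi0'
  set Kw : ℝ := ∑ i, ‖w i‖ with hKw
  have hKw0 : 0 < Kw := by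
    have : 0 < ‖w i0‖ := norm_pos_iff.mpr hi0
    refine lt_of_lt_of_le this ?_
    exact Finset.single_le_sum (fun i _ => norm_nonneg _) (Finset.mem_univ i0)
  have hbound : ∀ k, ‖w ⬝ᵥ x k‖ ≤ Kw * ‖x k‖ := by
    intro k
    calc ‖w ⬝ᵥ x k‖ ≤ ∑ i, ‖w i * x k i‖ := norm_sum_le _ _
      _ = ∑ i, ‖w i‖ * ‖x k i‖ := by simp [norm_mul]
      _ ≤ ∑ i, ‖w i‖ * ‖x k‖ := by
          gcongr with i
          exact norm_le_pi_norm (x k) i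
      _ = Kw * ‖x k‖ := by rw [hKw, Finset.sum_mul]
  have hdot : ∀ k, ‖w ⬝ᵥ x k‖ = ‖c‖ / ‖t k - lam‖ := by
    intro k
    have hne : ‖t k - lam‖ ≠ 0 := norm_ne_zero_iff.mpr (sub_ne_zero.mpr (hT k).2)
    have hnorm : ‖t k - lam‖ * ‖w ⬝ᵥ x k‖ = ‖c‖ := by rw [← norm_mul, hscalar k]
    rw [eq_div_iff hne, mul_comm]
    exact hnorm
  have hden : Tendsto (fun k => ‖t k - lam‖) atTop (𝓝[>] 0) := by
    apply tendsto_nhdsWithin_of_tendsto_nhds_of_eventually_within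
    · have : Tendsto (fun k => t k - lam) atTop (𝓝 (lam - lam)) := ht_tend.sub_const lam
      rw [sub_self] at this
      simpa using this.norm
    · exact Eventually.of_forall fun k =>
        Set.mem_Ioi.mpr (norm_pos_iff.mpr (sub_ne_zero.mpr (hT k).2))
  have hblow : Tendsto (fun k => ‖c‖ / ‖t k - lam‖) atTop atTop := by
    simp only [div_eq_mul_inv]
    exact (tendsto_inv_nhdsGT_zero.comp hden).const_mul_atTop (norm_pos_iff.mpr hc0)
  have hr : Tendsto (fun k => ‖x k‖) atTop atTop := by
    apply tendsto_atTop_mono (fun k => ?_) (hblow.atTop_div_const hKw0)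
    rw [div_le_iff₀' hKw0, ← hdot k]
    exact hbound k
  -- normalized sequence on the sphere
  haveI : Nonempty (Fin n) := ⟨i0⟩
  set u : ℕ → (Fin n → ℂ) := fun k =>
    if ‖x k‖ = 0 then (fun _ => 1) else ‖x k‖⁻¹ • x k with hu
  have hu_norm : ∀ k, ‖u k‖ = 1 := by
    intro k
    rw [hu]
    by_cases h : ‖x k‖ = 0
    · simp only [h, if_pos]
      simp [pi_norm_const]
    · simp only [h, if_neg, if_false]
      rw [norm_smul, norm_inv, norm_norm, inv_mul_cancel₀ h]
  have hu_mem : ∀ k, u k ∈ Metric.sphere (0 : Fin n → ℂ) 1 :=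
    fun k => mem_sphere_zero_iff_norm.mpr (hu_norm k)
  obtain ⟨uI, huImem, φ, hφmono, hφconv⟩ :=
    (isCompact_sphere (0 : Fin n → ℂ) 1).tendsto_subseq hu_mem
  have hφtop : Tendsto φ atTop atTop := hφmono.tendsto_atTop
  have hrφ : Tendsto (fun k => ‖x (φ k)‖) atTop atTop := hr.comp hφtop
  have hrinv : Tendsto (fun k => ‖x (φ k)‖⁻¹) atTop (𝓝 0) :=
    tendsto_inv_atTop_zero.comp hrφ
  have hev1 : ∀ᶠ k in atTop, 1 ≤ ‖x (φ k)‖ := hrφ.eventually_ge_atTop 1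
  have heq : ∀ᶠ k in atTop, u (φ k) = ‖x (φ k)‖⁻¹ • x (φ k) := by
    filter_upwards [hev1] with k hk
    rw [hu]
    simp only [if_neg (by linarith : ¬ ‖x (φ k)‖ = (0:ℝ))]
  have htφ : Tendsto (fun k => t (φ k)) atTop (𝓝 lam) := ht_tend.comp hφtop
  -- A * uI = lam • uI
  have hcontA : Continuous fun y : Fin n → ℂ => A *ᵥ y := by
    have := (Matrix.mulVecLin A).continuous_of_finiteDimensional
    exact this
  have hAu1 : Tendsto (fun k => A *ᵥ u (φ k)) atTop (𝓝 (A *ᵥ uI)) :=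
    (hcontA.tendsto uI).comp hφconv
  have hAx : ∀ k, A *ᵥ x k = t k • x k - B *ᵥ v := by
    intro k
    have h := hMx k
    rw [hM, Matrix.sub_mulVec, Matrix.smul_mulVec, Matrix.one_mulVec] at h
    linear_combination (norm := module) -h
  have hAu2 : Tendsto (fun k => A *ᵥ u (φ k)) atTop (𝓝 (lam • uI)) := by
    have hform : (fun k => A *ᵥ u (φ k)) =ᶠ[atTop]
        (fun k => t (φ k) • u (φ k) - ‖x (φ k)‖⁻¹ • (B *ᵥ v)) := by
      filter_upwards [heq] with k hk
      rw [hk, Matrix.mulVec_smul, hAx, smul_sub, smul_comm]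
    have hlim : Tendsto (fun k => t (φ k) • u (φ k) - ‖x (φ k)‖⁻¹ • (B *ᵥ v))
        atTop (𝓝 (lam • uI - (0:ℝ) • (B *ᵥ v))) :=
      (htφ.smul hφconv).sub (hrinv.smul_const (B *ᵥ v))
    rw [zero_smul, sub_zero] at hlim
    exact Tendsto.congr' (Filter.EventuallyEq.symm hform) hlim
  have hAu : A *ᵥ uI = lam • uI := tendsto_nhds_unique hAu1 hAu2
  -- C * uI = 0
  have hCx : ∀ k, ‖C *ᵥ x k‖ ≤ Cb + ‖D *ᵥ v‖ := by
    intro k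
    have hGk : (D + C * (M k)⁻¹ * B) *ᵥ v = D *ᵥ v + C *ᵥ x k := by
      simp only [Matrix.add_mulVec, ← Matrix.mulVec_mulVec, hx]
    have hb := (hT k).1.1
    have : C *ᵥ x k = (D + C * (M k)⁻¹ * B) *ᵥ v - D *ᵥ v := by
      rw [hGk]; abel
    rw [this]
    calc ‖(D + C * (M k)⁻¹ * B) *ᵥ v - D *ᵥ v‖
        ≤ ‖(D + C * (M k)⁻¹ * B) *ᵥ v‖ + ‖D *ᵥ v‖ := norm_sub_le _ _
      _ ≤ Cb + ‖D *ᵥ v‖ := by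
          have : ‖(D + C * (M k)⁻¹ * B) *ᵥ v‖ ≤ Cb := hb
          linarith
  have hcontC : Continuous fun y : Fin n → ℂ => C *ᵥ y := by
    have := (Matrix.mulVecLin C).continuous_of_finiteDimensional
    exact this
  have hCu1 : Tendsto (fun k => C *ᵥ u (φ k)) atTop (𝓝 (C *ᵥ uI)) :=
    (hcontC.tendsto uI).comp hφconv
  have hCu2 : Tendsto (fun k => C *ᵥ u (φ k)) atTop (𝓝 0) := by
    apply squeeze_zero_norm' (a := fun k => ‖x (φ k)‖⁻¹ * (Cb + ‖D *ᵥ v‖))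
    · filter_upwards [heq] with k hk
      rw [hk, Matrix.mulVec_smul, norm_smul, norm_inv, norm_norm]
      exact mul_le_mul_of_nonneg_left (hCx (φ k)) (by positivity)
    · simpa using hrinv.mul_const (Cb + ‖D *ᵥ v‖)
  have hCu : C *ᵥ uI = 0 := tendsto_nhds_unique hCu1 hCu2
  have hzero : uI = 0 := hobsv lam uI hAu hCu
  have : ‖uI‖ = 1 := mem_sphere_zero_iff_norm.mp huImem
  rw [hzero, norm_zero] at this
  exact zero_ne_one this
end
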